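/- Let A → B be a module-finite injective homomorphism of integral domains of characteristic p > 0, with fraction fields L = Frac(A) and M = Frac(B). Let L' be the separable closure of L in M. Then there exists a power q of p such that M^q ⊆ L', and setting A' = A·B^q (the subring of B generated by A and q-th powers of elements of B), the inclusion A' ⊆ B is an F-equivalence and Frac(A') = L'. -/

import Mathlib

/-- Let `A ⊆ B` be a module-finite inclusion of domains of characteristic `p`, with fraction
fields `L`, `M`, and let `L'` be the separable closure of `L` in `M`. Then there is a power
`q = p^k` with `M^q ⊆ L'`, and the subring `A' = A·B^q` of `B` satisfies: the inclusion
`A' ⊆ B` is an `F`-equivalence, and `Frac(A') = L'`. -/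
theorem stmt18 (p : ℕ) [Fact p.Prime] (A B : Type*) [CommRing A] [CommRing B]
    [IsDomain A] [IsDomain B] [CharP A p] [Algebra A B] [Module.Finite A B]
    (hinj : Function.Injective (algebraMap A B))
    (L M : Type*) [Field L] [Field M] [Algebra A L] [IsFractionRing A L]
    [Algebra B M] [IsFractionRing B M] [Algebra L M] [Algebra A M]
    [IsScalarTower A B M] [IsScalarTower A L M] :
    ∃ k : ℕ,
      (∀ x : M, x ^ p ^ k ∈ separableClosure L M) ∧
      (∀ b : B, ∃ m : ℕ,
        b ^ p ^ m ∈ Algebra.adjoin A (Set.range fun b' : B => b' ^ p ^ k)) ∧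
      Subfield.closure
          (algebraMap B M ''
            ((Algebra.adjoin A (Set.range fun b' : B => b' ^ p ^ k) : Subalgebra A B) : Set B))
        = (separableClosure L M).toSubfield := by
  have hp : p.Prime := Fact.out
  haveI : CharP B p := charP_of_injective_algebraMap hinj p
  haveI : CharP M p := charP_of_injective_algebraMap (IsFractionRing.injective B M) p
  haveI : ExpChar M p := .prime hp
  haveI : Algebra.IsAlgebraic L M := isAlgebraic_of_isFractionRing (R := A) (S := B) L M
  haveI : CharP (separableClosure L M) p :=
    (algebraMap (separableClosure L M) M).charP (algebraMap (separableClosure L M) M).injective p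
  haveI : ExpChar (separableClosure L M) p := .prime hp
  -- every element of M has a power in the separable closure
  have hM : ∀ x : M, ∃ n : ℕ, x ^ p ^ n ∈ separableClosure L M := by
    intro x
    obtain ⟨n, y, hy⟩ := IsPurelyInseparable.pow_mem (separableClosure L M) p x
    exact ⟨n, by rw [← hy]; exact y.2⟩
  choose f hf using hM
  -- raising exponents stays in the closure
  have hup : ∀ (x : M) (n m : ℕ), n ≤ m → x ^ p ^ n ∈ separableClosure L M →
      x ^ p ^ m ∈ separableClosure L M := by
    intro x n m h hx
    have : x ^ p ^ m = (x ^ p ^ n) ^ p ^ (m - n) := by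
      rw [← pow_mul, ← pow_add, Nat.add_sub_cancel' h]
    rw [this]; exact pow_mem hx _
  -- generators
  obtain ⟨s, hs⟩ := Module.Finite.fg_top (R := A) (M := B)
  set k := s.sup fun b => f (algebraMap B M b) with hk
  -- uniform bound for elements of B
  have hB : ∀ b : B, (algebraMap B M b) ^ p ^ k ∈ separableClosure L M := by
    intro b
    have hb : b ∈ Submodule.span A (s : Set B) := hs ▸ Submodule.mem_top
    induction hb using Submodule.span_induction with
    | mem b hb => exact hup _ _ _ (Finset.le_sup hb) (hf _)
    | zero => rw [map_zero, zero_pow (pow_ne_zero _ hp.ne_zero)]; exact zero_mem _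
    | add x y hx hy ihx ihy =>
        rw [map_add, add_pow_expChar_pow]; exact add_mem ihx ihy
    | smul a x hx ihx =>
        rw [Algebra.smul_def, map_mul, ← IsScalarTower.algebraMap_apply A B M, mul_pow]
        refine mul_mem (pow_mem ?_ _) ihx
        rw [IsScalarTower.algebraMap_apply A L M]
        exact (separableClosure L M).algebraMap_mem _
  have key : ∀ x : M, x ^ p ^ k ∈ separableClosure L M := by
    intro x
    obtain ⟨b, c, hc, rfl⟩ := IsFractionRing.div_surjective (A := B) x
    rw [div_pow]
    exact div_mem (hB b) (hB c)
  refine ⟨k, key, fun b => ⟨k, Algebra.subset_adjoin ⟨b, rfl⟩⟩, ?_⟩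
  set A' := Algebra.adjoin A (Set.range fun b' : B => b' ^ p ^ k) with hA'
  set F := Subfield.closure (algebraMap B M '' (A' : Set B)) with hF
  -- the image of L lies in F
  have halg : ∀ l : L, algebraMap L M l ∈ F := by
    intro l
    obtain ⟨a, c, hc, rfl⟩ := IsFractionRing.div_surjective (A := A) l
    have hmem : ∀ a : A, algebraMap L M (algebraMap A L a) ∈ F := by
      intro a
      rw [← IsScalarTower.algebraMap_apply A L M, IsScalarTower.algebraMap_apply A B M]
      exact Subfield.subset_closure ⟨algebraMap A B a, A'.algebraMap_mem a, rfl⟩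
    rw [map_div₀]
    exact div_mem (hmem a) (hmem c)
  apply le_antisymm
  · -- closure ≤ separable closure
    rw [Subfield.closure_le]
    rintro _ ⟨b, hb, rfl⟩
    show algebraMap B M b ∈ separableClosure L M
    induction hb using Algebra.adjoin_induction with
    | mem b hb =>
        obtain ⟨b', rfl⟩ := hb
        rw [map_pow]; exact key _
    | algebraMap a =>
        rw [← IsScalarTower.algebraMap_apply A B M, IsScalarTower.algebraMap_apply A L M]
        exact (separableClosure L M).algebraMap_mem _
    | add x y hx hy ihx ihy => rw [map_add]; exact add_mem ihx ihy
    | mul x y hx hy ihx ihy => rw [map_mul]; exact mul_mem ihx ihy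
  · -- separable closure ≤ closure
    intro x hx
    have hx' : x ∈ separableClosure L M := hx
    have hsep : IsSeparable L x := mem_separableClosure_iff.mp hx'
    set F' : IntermediateField L M := F.toIntermediateField halg with hF'
    haveI : CharP F' p := (algebraMap F' M).charP (algebraMap F' M).injective p
    haveI : ExpChar F' p := .prime hp
    have hsep' : IsSeparable F' x := IsSeparable.tower_top F' hsep
    have hq : x ^ p ^ k ∈ F := by
      obtain ⟨b, c, hc, rfl⟩ := IsFractionRing.div_surjective (A := B) x
      rw [div_pow, ← map_pow, ← map_pow]
      exact div_mem (Subfield.subset_closure ⟨b ^ p ^ k, Algebra.subset_adjoin ⟨b, rfl⟩, rfl⟩)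
        (Subfield.subset_closure ⟨c ^ p ^ k, Algebra.subset_adjoin ⟨c, rfl⟩, rfl⟩)
    haveI h1 : IsPurelyInseparable F' (IntermediateField.adjoin F' {x}) :=
      (IntermediateField.isPurelyInseparable_adjoin_simple_iff_pow_mem F' M p).mpr
        ⟨k, ⟨⟨x ^ p ^ k, hq⟩, rfl⟩⟩
    haveI h2 : Algebra.IsSeparable F' (IntermediateField.adjoin F' {x}) :=
      (IntermediateField.isSeparable_adjoin_simple_iff_isSeparable F' M).mpr hsep'
    have h3 : IntermediateField.adjoin F' {x} = ⊥ :=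
      IntermediateField.eq_bot_of_isPurelyInseparable_of_isSeparable _
    have hxF' : x ∈ (⊥ : IntermediateField F' M) :=
      h3 ▸ IntermediateField.mem_adjoin_simple_self F' x
    rw [IntermediateField.mem_bot] at hxF'
    obtain ⟨y, rfl⟩ := hxF'
    exact y.2
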